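/- arXiv:1702.06414 — 6 statements merged into one kernel-verified Lean document; each statement's English description precedes it below -/
import Mathlib

section
/- Let B be a Boolean algebra. The completion ⟨𝒫(Uf(B)), φ_B⟩ is dense: for every subset A ⊆ Uf(B), A = ⋃ { ⋂_{a ∈ F} φ_B(a) : F a filter of B with ⋂_{a ∈ F} φ_B(a) ⊆ A } and A = ⋂ { ⋃_{a ∈ I} φ_B(a) : I an ideal of B with A ⊆ ⋃_{a ∈ I} φ_B(a) }. -/
/-- A (lattice) filter of a Boolean algebra: a nonempty, upward-closed subset
closed under binary meets. -/
def IsLatFilter {B : Type*} [BooleanAlgebra B] (F : Set B) : Prop :=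
  F.Nonempty ∧ (∀ a b : B, a ∈ F → a ≤ b → b ∈ F) ∧ (∀ a b : B, a ∈ F → b ∈ F → a ⊓ b ∈ F)

/-- A (lattice) ideal of a Boolean algebra: a nonempty, downward-closed subset
closed under binary joins. -/
def IsLatIdeal {B : Type*} [BooleanAlgebra B] (I : Set B) : Prop :=
  I.Nonempty ∧ (∀ a b : B, a ∈ I → b ≤ a → b ∈ I) ∧ (∀ a b : B, a ∈ I → b ∈ I → a ⊔ b ∈ I)

/-- An ultrafilter of a Boolean algebra: a maximal proper filter. -/
def IsUf {B : Type*} [BooleanAlgebra B] (F : Set B) : Prop :=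
  IsLatFilter F ∧ F ≠ Set.univ ∧
    ∀ G : Set B, IsLatFilter G → G ≠ Set.univ → F ⊆ G → F = G

/-- `Uf B` is the set (type) of ultrafilters of the Boolean algebra `B`. -/
def Uf (B : Type*) [BooleanAlgebra B] : Type _ := {F : Set B // IsUf F}

/-- The Stone map `φ_B : B → 𝒫(Uf B)`, `φ_B a = {u ∈ Uf B : a ∈ u}`. -/
def stoneMap (B : Type*) [BooleanAlgebra B] : B → Set (Uf B) := fun a => {u : Uf B | a ∈ u.1}

/-- The canonical extension of a map `h : B₁ → B₂`:
`h^σ(A) = ⋃ { ⋂_{a ∈ F} φ₂(h a) : F a filter of B₁ with ⋂_{a ∈ F} φ₁ a ⊆ A }`. -/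
def canExt {B₁ B₂ : Type*} [BooleanAlgebra B₁] [BooleanAlgebra B₂] (h : B₁ → B₂)
    (A : Set (Uf B₁)) : Set (Uf B₂) :=
  ⋃ F ∈ {F : Set B₁ | IsLatFilter F ∧ (⋂ a ∈ F, stoneMap B₁ a) ⊆ A},
    ⋂ a ∈ F, stoneMap B₂ (h a)

lemma uf_top_mem {B : Type*} [BooleanAlgebra B] {F : Set B} (hF : IsUf F) : (⊤ : B) ∈ F := by
  obtain ⟨⟨⟨x, hx⟩, hup, _⟩, _, _⟩ := hF
  exact hup x ⊤ hx le_top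

lemma uf_bot_not_mem {B : Type*} [BooleanAlgebra B] {F : Set B} (hF : IsUf F) : (⊥ : B) ∉ F := by
  intro hbot
  obtain ⟨⟨_, hup, _⟩, hproper, _⟩ := hF
  exact hproper (Set.eq_univ_of_forall fun c => hup ⊥ c hbot bot_le)

lemma uf_prime {B : Type*} [BooleanAlgebra B] {F : Set B} (hF : IsUf F) {a b : B}
    (hab : a ⊔ b ∈ F) : a ∈ F ∨ b ∈ F := by
  by_contra h
  push_neg at h
  obtain ⟨ha, hb⟩ := h
  obtain ⟨⟨hne, hup, hmeet⟩, hproper, hmax⟩ := hF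
  set G : Set B := {c | ∃ x ∈ F, x ⊓ a ≤ c} with hGdef
  have hGF : F ⊆ G := fun c hc => ⟨c, hc, inf_le_left⟩
  have hGfilter : IsLatFilter G := by
    refine ⟨hne.mono hGF, ?_, ?_⟩
    · rintro c d ⟨x, hx, hxc⟩ hcd; exact ⟨x, hx, hxc.trans hcd⟩
    · rintro c d ⟨x, hx, hxc⟩ ⟨y, hy, hyd⟩
      exact ⟨x ⊓ y, hmeet _ _ hx hy,
        le_inf ((inf_le_inf_right a inf_le_left).trans hxc)
          ((inf_le_inf_right a inf_le_right).trans hyd)⟩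
  by_cases hGuniv : G = Set.univ
  · have hbotG : (⊥ : B) ∈ G := by rw [hGuniv]; trivial
    obtain ⟨x, hx, hxbot⟩ := hbotG
    have hxcompl : x ≤ aᶜ := le_compl_iff_disjoint_right.mpr (disjoint_iff_inf_le.mpr hxbot)
    have hac : aᶜ ∈ F := hup x aᶜ hx hxcompl
    have hmem : (a ⊔ b) ⊓ aᶜ ∈ F := hmeet _ _ hab hac
    have hle : (a ⊔ b) ⊓ aᶜ ≤ b := by
      rw [inf_sup_right, inf_compl_eq_bot, bot_sup_eq]
      exact inf_le_left
    exact hb (hup _ _ hmem hle)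
  · have hFG := hmax G hGfilter hGuniv hGF
    obtain ⟨x, hx⟩ := hne
    have : a ∈ G := ⟨x, hx, inf_le_right⟩
    rw [← hFG] at this
    exact ha this

lemma uf_eq_of_subset {B : Type*} [BooleanAlgebra B] {u v : Uf B} (h : u.1 ⊆ v.1) : u = v :=
  Subtype.ext (u.2.2.2 v.1 v.2.1 v.2.2.1 h)

/-- The completion `⟨𝒫(Uf B), φ_B⟩` is dense: every `A ⊆ Uf B` is the union
of the meets of filter images below it, and the intersection of the joins of ideal images
above it. -/
theorem stone_completion_dense (B : Type*) [BooleanAlgebra B] (A : Set (Uf B)) :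
    A = (⋃ F ∈ {F : Set B | IsLatFilter F ∧ (⋂ a ∈ F, stoneMap B a) ⊆ A},
          ⋂ a ∈ F, stoneMap B a) ∧
    A = (⋂ I ∈ {I : Set B | IsLatIdeal I ∧ A ⊆ ⋃ a ∈ I, stoneMap B a},
          ⋃ a ∈ I, stoneMap B a) := by
  constructor
  · apply Set.Subset.antisymm
    · intro u hu
      refine Set.mem_biUnion (x := u.1) ?_ ?_
      · refine ⟨u.2.1, ?_⟩
        intro v hv
        have hsub : u.1 ⊆ v.1 := by
          intro a ha
          have := Set.mem_iInter₂.mp hv a ha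
          exact this
        rw [← uf_eq_of_subset hsub]
        exact hu
      · exact Set.mem_iInter₂.mpr fun a ha => ha
    · intro u hu
      obtain ⟨F, hF, hmem⟩ := Set.mem_iUnion₂.mp hu
      exact hF.2 hmem
  · apply Set.Subset.antisymm
    · intro u hu
      exact Set.mem_iInter₂.mpr fun I hI => hI.2 hu
    · intro u hu
      by_contra hA
      set I : Set B := {a | a ∉ u.1} with hIdef
      have hI : IsLatIdeal I := by
        refine ⟨⟨⊥, uf_bot_not_mem u.2⟩, ?_, ?_⟩
        · intro a b ha hba hb
          exact ha (u.2.1.2.1 b a hb hba)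
        · intro a b ha hb hab
          rcases uf_prime u.2 hab with h | h
          · exact ha h
          · exact hb h
      have hAsub : A ⊆ ⋃ a ∈ I, stoneMap B a := by
        intro v hv
        have hne : ¬ v.1 ⊆ u.1 := fun h => hA (uf_eq_of_subset h ▸ hv)
        obtain ⟨a, hav, hau⟩ := Set.not_subset.mp hne
        exact Set.mem_biUnion hau hav
      have := Set.mem_iInter₂.mp hu I ⟨hI, hAsub⟩
      obtain ⟨a, ha, hmem⟩ := Set.mem_iUnion₂.mp this
      exact ha hmem
end

section
/- Let B₁ and B₂ be Boolean algebras and h : B₁ → B₂ an order-preserving map. Then the canonical extension h^σ : 𝒫(Uf(B₁)) → 𝒫(Uf(B₂)) is order-preserving (monotone with respect to ⊆) and extends h, i.e. h^σ(φ₁(a)) = φ₂(h(a)) for every a ∈ B₁. -/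
lemma filter_proper_iff {B : Type*} [BooleanAlgebra B] {F : Set B} (hF : IsLatFilter F) :
    F ≠ Set.univ ↔ ⊥ ∉ F := by
  constructor
  · intro hne hbot
    exact hne (Set.eq_univ_of_forall fun x => hF.2.1 ⊥ x hbot bot_le)
  · intro hbot hne
    exact hbot (hne ▸ Set.mem_univ ⊥)

lemma exists_uf_extending {B : Type*} [BooleanAlgebra B] {G : Set B}
    (hG : IsLatFilter G) (hGp : G ≠ Set.univ) :
    ∃ u : Set B, IsUf u ∧ G ⊆ u := by
  set S : Set (Set B) := {F | IsLatFilter F ∧ ⊥ ∉ F} with hS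
  have hchain : ∀ c ⊆ S, IsChain (· ⊆ ·) c → c.Nonempty →
      ∃ ub ∈ S, ∀ s ∈ c, s ⊆ ub := by
    intro c hcS hchain ⟨F₀, hF₀⟩
    refine ⟨⋃₀ c, ⟨⟨?_, ?_, ?_⟩, ?_⟩, fun s hs => Set.subset_sUnion_of_mem hs⟩
    · obtain ⟨x, hx⟩ := (hcS hF₀).1.1
      exact ⟨x, F₀, hF₀, hx⟩
    · rintro a b ⟨F, hF, haF⟩ hab
      exact ⟨F, hF, (hcS hF).1.2.1 a b haF hab⟩
    · rintro a b ⟨F, hF, haF⟩ ⟨F', hF', hbF'⟩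
      rcases hchain.total hF hF' with hle | hle
      · exact ⟨F', hF', (hcS hF').1.2.2 a b (hle haF) hbF'⟩
      · exact ⟨F, hF, (hcS hF).1.2.2 a b haF (hle hbF')⟩
    · rintro ⟨F, hF, hbF⟩
      exact (hcS hF).2 hbF
  have hGS : G ∈ S := ⟨hG, (filter_proper_iff hG).1 hGp⟩
  obtain ⟨M, hGM, hMS, hmax⟩ := zorn_subset_nonempty S hchain G hGS
  refine ⟨M, ⟨hMS.1, (filter_proper_iff hMS.1).2 hMS.2, ?_⟩, hGM⟩
  intro G' hG' hG'p hMG'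
  exact subset_antisymm hMG' (hmax ⟨hG', (filter_proper_iff hG').1 hG'p⟩ hMG')

lemma mem_of_iInter_subset {B : Type*} [BooleanAlgebra B] {F : Set B} (hF : IsLatFilter F)
    {a : B} (hsub : (⋂ b ∈ F, stoneMap B b) ⊆ stoneMap B a) : a ∈ F := by
  by_contra haF
  set G : Set B := {x | ∃ b ∈ F, b ⊓ aᶜ ≤ x} with hGdef
  have hFG : F ⊆ G := fun b hb => ⟨b, hb, inf_le_left⟩
  have hG : IsLatFilter G := by
    refine ⟨?_, ?_, ?_⟩
    · obtain ⟨b, hb⟩ := hF.1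
      exact ⟨b ⊓ aᶜ, b, hb, le_rfl⟩
    · rintro x y ⟨b, hb, hbx⟩ hxy
      exact ⟨b, hb, hbx.trans hxy⟩
    · rintro x y ⟨b, hb, hbx⟩ ⟨b', hb', hby⟩
      refine ⟨b ⊓ b', hF.2.2 b b' hb hb', ?_⟩
      calc b ⊓ b' ⊓ aᶜ ≤ (b ⊓ aᶜ) ⊓ (b' ⊓ aᶜ) := by
            simp only [le_inf_iff]
            constructor <;> constructor
            · exact inf_le_left.trans inf_le_left
            · exact inf_le_right
            · exact inf_le_left.trans inf_le_right
            · exact inf_le_right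
        _ ≤ x ⊓ y := inf_le_inf hbx hby
  have hGp : G ≠ Set.univ := by
    rw [filter_proper_iff hG]
    rintro ⟨b, hb, hble⟩
    have : b ≤ a := by
      have h2 := le_bot_iff.mp hble
      rw [← sdiff_eq] at h2
      exact sdiff_eq_bot_iff.mp h2
    exact haF (hF.2.1 b a hb this)
  obtain ⟨u, hu, hGu⟩ := exists_uf_extending hG hGp
  have hau : a ∈ u := hsub (Set.mem_iInter₂.mpr fun b hb => hGu (hFG hb) : (⟨u, hu⟩ : Uf B) ∈ _)
  obtain ⟨b₀, hb₀⟩ := hF.1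
  have hacu : aᶜ ∈ u := hGu ⟨b₀, hb₀, inf_le_right⟩
  have : (⊥ : B) ∈ u := by
    have := hu.1.2.2 a aᶜ hau hacu
    rwa [inf_compl_eq_bot] at this
  exact (filter_proper_iff hu.1).1 hu.2.1 this

/-- For an order-preserving map `h : B₁ → B₂`, the canonical extension
`h^σ : 𝒫(Uf B₁) → 𝒫(Uf B₂)` is order-preserving (monotone w.r.t. `⊆`) and extends `h`:
`h^σ (φ₁ a) = φ₂ (h a)` for all `a ∈ B₁`. -/
theorem canExt_monotone_and_extends {B₁ B₂ : Type*} [BooleanAlgebra B₁] [BooleanAlgebra B₂]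
    (h : B₁ → B₂) (hmono : Monotone h) :
    (∀ A A' : Set (Uf B₁), A ⊆ A' → canExt h A ⊆ canExt h A') ∧
    (∀ a : B₁, canExt h (stoneMap B₁ a) = stoneMap B₂ (h a)) := by

  constructor
  · intro A A' hAA' u hu
    obtain ⟨F, ⟨hFfil, hFsub⟩, hu⟩ := Set.mem_iUnion₂.mp hu
    exact Set.mem_iUnion₂.mpr ⟨F, ⟨hFfil, hFsub.trans hAA'⟩, hu⟩
  · intro a
    ext u
    constructor
    · intro hu
      obtain ⟨F, ⟨hFfil, hFsub⟩, hu⟩ := Set.mem_iUnion₂.mp hu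
      have haF : a ∈ F := mem_of_iInter_subset hFfil hFsub
      exact Set.mem_iInter₂.mp hu a haF
    · intro hu
      refine Set.mem_iUnion₂.mpr ⟨{b | a ≤ b}, ⟨⟨⟨a, le_rfl⟩, ?_, ?_⟩, ?_⟩, ?_⟩
      · exact fun x y hx hxy => le_trans hx hxy
      · exact fun x y hx hy => le_inf hx hy
      · intro v hv
        exact Set.mem_iInter₂.mp hv a le_rfl
      · refine Set.mem_iInter₂.mpr fun b hb => ?_
        exact u.2.1.2.1 (h a) (h b) hu (hmono hb)
end

section
/- Let B₁ and B₂ be Boolean algebras and h : B₁ → B₂ a Boolean homomorphism, with Stone dual h_* : Uf(B₂) → Uf(B₁) given by h_*(v) = h⁻¹(v). Then for every subset A ⊆ Uf(B₁) and every ultrafilter ∇ on the set Uf(B₂): h^σ(A) ∈ ∇ if and only if A ∈ (Ultrafilter.map h_*)(∇). Equivalently, the image of h^σ(A) under the Stone map of the Boolean algebra 𝒫(Uf(B₂)) equals the preimage under h_*^β = Ultrafilter.map h_* of the image of A under the Stone map of 𝒫(Uf(B₁)); that is, h^σ = (h_*^β)^*. -/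
/-- For a Boolean homomorphism `h : B₁ → B₂` with Stone dual
`h_* : Uf B₂ → Uf B₁`, `h_* v = h⁻¹ v`: for every `A ⊆ Uf B₁` and every ultrafilter `∇` on
the set `Uf B₂`, `h^σ(A) ∈ ∇ ↔ A ∈ (Ultrafilter.map h_*) ∇`; i.e. the image of `h^σ(A)`
under the Stone map of `𝒫(Uf B₂)` is the preimage under `h_*^β = Ultrafilter.map h_*` of the
image of `A` under the Stone map of `𝒫(Uf B₁)`: `h^σ = (h_*^β)^*`. -/
theorem canExt_eq_dual_of_stone_cech_extension {B₁ B₂ : Type*}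
    [BooleanAlgebra B₁] [BooleanAlgebra B₂] (h : BoundedLatticeHom B₁ B₂)
    (hdual : Uf B₂ → Uf B₁) (hdual_spec : ∀ v : Uf B₂, (hdual v).1 = (⇑h) ⁻¹' v.1) :
    ∀ (A : Set (Uf B₁)) (U : Ultrafilter (Uf B₂)),
      canExt (⇑h) A ∈ U ↔ A ∈ Ultrafilter.map hdual U := by
  intro A U
  have key : canExt (⇑h) A = hdual ⁻¹' A := by
    ext u
    constructor
    · intro hu
      obtain ⟨F, ⟨hF, hsub⟩, hmem⟩ := Set.mem_iUnion₂.mp hu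
      apply hsub
      refine Set.mem_iInter₂.mpr fun a ha => ?_
      show a ∈ (hdual u).1
      rw [hdual_spec]
      exact (Set.mem_iInter₂.mp hmem a ha : h a ∈ u.1)
    · intro hu
      refine Set.mem_iUnion₂.mpr ⟨(hdual u).1, ⟨(hdual u).2.1, ?_⟩, ?_⟩
      · intro v hv
        have hsub : (hdual u).1 ⊆ v.1 := fun a ha => Set.mem_iInter₂.mp hv a ha
        have heq : hdual u = v :=
          Subtype.ext ((hdual u).2.2.2 v.1 v.2.1 v.2.2.1 hsub)
        rw [← heq]; exact hu
      · refine Set.mem_iInter₂.mpr fun a ha => ?_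
        show h a ∈ u.1
        rw [hdual_spec] at ha; exact ha
  rw [key, Ultrafilter.mem_map]
end

section
/- Let B₁ and B₂ be Boolean algebras and h : B₁ → B₂ a Boolean homomorphism. Then for every A ⊆ Uf(B₁), the canonical extension satisfies h^σ(A) = {v ∈ Uf(B₂) : h⁻¹(v) ∈ A}, i.e. h^σ(A) is the preimage of A under the dual map h_* : Uf(B₂) → Uf(B₁), h_*(v) = h⁻¹(v). -/
/-- For a Boolean homomorphism `h : B₁ → B₂` and every `A ⊆ Uf B₁`,
`h^σ(A) = {v ∈ Uf B₂ : h⁻¹ v ∈ A}`, i.e. `h^σ(A)` is the preimage of `A` under the dual map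
`h_* : Uf B₂ → Uf B₁`, `h_* v = h⁻¹ v`. -/
theorem canExt_eq_preimage_dual {B₁ B₂ : Type*}
    [BooleanAlgebra B₁] [BooleanAlgebra B₂] (h : BoundedLatticeHom B₁ B₂)
    (hdual : Uf B₂ → Uf B₁) (hdual_spec : ∀ v : Uf B₂, (hdual v).1 = (⇑h) ⁻¹' v.1)
    (A : Set (Uf B₁)) :
    canExt (⇑h) A = hdual ⁻¹' A := by

  ext v
  constructor
  · intro hv
    simp only [canExt, Set.mem_iUnion, Set.mem_setOf_eq] at hv
    obtain ⟨F, ⟨hF, hFA⟩, hvF⟩ := hv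
    apply hFA
    simp only [Set.mem_iInter, stoneMap, Set.mem_setOf_eq]
    intro a ha
    rw [hdual_spec]
    have := Set.mem_iInter₂.mp hvF a ha
    exact this
  · intro hv
    simp only [canExt, Set.mem_iUnion, Set.mem_setOf_eq]
    refine ⟨(hdual v).1, ⟨(hdual v).2.1, ?_⟩, ?_⟩
    · intro u hu
      have hsub : (hdual v).1 ⊆ u.1 := by
        intro a ha
        have := Set.mem_iInter₂.mp hu a ha
        exact this
      have : (hdual v).1 = u.1 :=
        (hdual v).2.2.2 u.1 u.2.1 u.2.2.1 hsub
      have : hdual v = u := Subtype.ext this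
      rw [← this]; exact hv
    · apply Set.mem_iInter₂.mpr
      intro a ha
      rw [hdual_spec] at ha
      exact ha
end

section
/- Let B₁ and B₂ be Boolean algebras and h : B₁ → B₂ a Boolean homomorphism. If h is surjective, then its canonical extension h^σ : 𝒫(Uf(B₁)) → 𝒫(Uf(B₂)) is surjective. -/

lemma top_mem_of_filter {B : Type*} [BooleanAlgebra B] {F : Set B} (hF : IsLatFilter F) :
    ⊤ ∈ F := by
  obtain ⟨⟨a, ha⟩, hup, -⟩ := hF
  exact hup a ⊤ ha le_top

lemma filter_eq_univ_of_bot_mem {B : Type*} [BooleanAlgebra B] {F : Set B}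
    (hF : IsLatFilter F) (hbot : ⊥ ∈ F) : F = Set.univ := by
  ext x; simp only [Set.mem_univ, iff_true]
  exact hF.2.1 ⊥ x hbot bot_le

lemma compl_mem_of_not_mem {B : Type*} [BooleanAlgebra B] {F : Set B} (hF : IsUf F)
    {a : B} (ha : a ∉ F) : aᶜ ∈ F := by
  by_contra hc
  set G : Set B := {x | ∃ f ∈ F, f ⊓ a ≤ x} with hGdef
  have hFG : F ⊆ G := fun f hf => ⟨f, hf, inf_le_left⟩
  have hGfilter : IsLatFilter G := by
    refine ⟨⟨⊤, ⊤, top_mem_of_filter hF.1, le_top⟩, ?_, ?_⟩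
    · rintro x y ⟨f, hf, hle⟩ hxy
      exact ⟨f, hf, hle.trans hxy⟩
    · rintro x y ⟨f, hf, hlex⟩ ⟨g, hg, hley⟩
      refine ⟨f ⊓ g, hF.1.2.2 f g hf hg, ?_⟩
      calc (f ⊓ g) ⊓ a ≤ (f ⊓ a) ⊓ (g ⊓ a) :=
            le_inf (inf_le_inf_right a inf_le_left) (inf_le_inf_right a inf_le_right)
        _ ≤ x ⊓ y := inf_le_inf hlex hley
  have hGproper : G ≠ Set.univ := by
    intro hG
    have hbot : ⊥ ∈ G := by rw [hG]; trivial
    obtain ⟨f, hf, hle⟩ := hbot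
    have : f ≤ aᶜ := le_compl_iff_disjoint_right.2 (disjoint_iff_inf_le.2 hle)
    exact hc (hF.1.2.1 f aᶜ hf this)
  have hEq := hF.2.2 G hGfilter hGproper hFG
  exact ha (hEq ▸ ⟨⊤, top_mem_of_filter hF.1, inf_le_right⟩ : a ∈ F)

lemma uf_eq_of_subset_s14 {B : Type*} [BooleanAlgebra B] {F G : Set B} (hF : IsUf F)
    (hG : IsUf G) (hsub : F ⊆ G) : F = G :=
  hF.2.2 G hG.1 hG.2.1 hsub

lemma preimage_isUf {B₁ B₂ : Type*} [BooleanAlgebra B₁] [BooleanAlgebra B₂]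
    (h : BoundedLatticeHom B₁ B₂) {v : Set B₂} (hv : IsUf v) : IsUf (⇑h ⁻¹' v) := by
  have hfil : IsLatFilter (⇑h ⁻¹' v) := by
    refine ⟨⟨⊤, ?_⟩, ?_, ?_⟩
    · show h ⊤ ∈ v
      rw [map_top]; exact top_mem_of_filter hv.1
    · intro a b ha hab
      exact hv.1.2.1 (h a) (h b) ha (by
        have : h (a ⊓ b) = h a ⊓ h b := map_inf h a b
        rw [inf_eq_left.2 hab] at this
        exact le_of_eq_of_le this inf_le_right)
    · intro a b ha hb
      show h (a ⊓ b) ∈ v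
      rw [map_inf]; exact hv.1.2.2 _ _ ha hb
  refine ⟨hfil, ?_, ?_⟩
  · intro hU
    have : h ⊥ ∈ v := by
      have : (⊥ : B₁) ∈ ⇑h ⁻¹' v := by rw [hU]; trivial
      exact this
    rw [map_bot] at this
    exact hv.2.1 (filter_eq_univ_of_bot_mem hv.1 this)
  · intro G hGf hGp hsub
    apply Set.Subset.antisymm hsub
    intro b hb
    by_contra hnb
    have hcompl : (h b)ᶜ ∈ v := compl_mem_of_not_mem hv hnb
    have : bᶜ ∈ ⇑h ⁻¹' v := by
      show h bᶜ ∈ v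
      rw [map_compl']; exact hcompl
    have hbc : bᶜ ∈ G := hsub this
    have : (⊥ : B₁) ∈ G := by
      have := hGf.2.2 b bᶜ hb hbc
      simpa using this
    exact hGp (filter_eq_univ_of_bot_mem hGf this)

/-- If a Boolean homomorphism `h : B₁ → B₂` is surjective, then its canonical
extension `h^σ : 𝒫(Uf B₁) → 𝒫(Uf B₂)` is surjective. -/
theorem canExt_surjective {B₁ B₂ : Type*} [BooleanAlgebra B₁] [BooleanAlgebra B₂]
    (h : BoundedLatticeHom B₁ B₂) (hsurj : Function.Surjective h) :
    Function.Surjective (canExt (⇑h)) := by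
  intro A'
  -- the dual map on ultrafilters
  let p : Uf B₂ → Uf B₁ := fun v => ⟨⇑h ⁻¹' v.1, preimage_isUf h v.2⟩
  refine ⟨p '' A', ?_⟩
  ext w
  simp only [canExt, Set.mem_iUnion, Set.mem_setOf_eq, Set.mem_iInter, stoneMap]
  constructor
  · rintro ⟨F, ⟨⟨hFfil, hFsub⟩, hw⟩⟩
    -- p w is an ultrafilter of B₁ containing F
    have hmem : p w ∈ ⋂ a ∈ F, stoneMap B₁ a := by
      simp only [Set.mem_iInter, stoneMap, Set.mem_setOf_eq]
      intro a ha
      exact hw a ha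
    have hpA : p w ∈ p '' A' := hFsub hmem
    obtain ⟨v, hv, hpv⟩ := hpA
    have hpre : ⇑h ⁻¹' v.1 = ⇑h ⁻¹' w.1 := congrArg Subtype.val hpv
    have : v.1 = w.1 := by
      rw [← Set.image_preimage_eq v.1 hsurj, ← Set.image_preimage_eq w.1 hsurj, hpre]
    have : v = w := Subtype.ext this
    rwa [← this]
  · intro hw
    refine ⟨⇑h ⁻¹' w.1, ⟨⟨(preimage_isUf h w.2).1, ?_⟩, fun a ha => ha⟩⟩
    intro u hu
    simp only [Set.mem_iInter, stoneMap, Set.mem_setOf_eq] at hu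
    have hsub : (p w).1 ⊆ u.1 := fun a ha => hu a ha
    have : (p w).1 = u.1 := uf_eq_of_subset_s14 (p w).2 u.2 hsub
    have : p w = u := Subtype.ext this
    exact this ▸ Set.mem_image_of_mem p hw
end

section
/- Let B₁ and B₂ be Boolean algebras and h : B₁ → B₂ a Boolean isomorphism. Then its canonical extension h^σ : 𝒫(Uf(B₁)) → 𝒫(Uf(B₂)) is a Boolean algebra isomorphism between the powerset Boolean algebras 𝒫(Uf(B₁)) and 𝒫(Uf(B₂)). -/
section Aux

variable {B₁ B₂ : Type*} [BooleanAlgebra B₁] [BooleanAlgebra B₂]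

/-- Image of a lattice filter under an order isomorphism is a lattice filter. -/
lemma isLatFilter_image (e : B₁ ≃o B₂) {F : Set B₁} (hF : IsLatFilter F) :
    IsLatFilter (⇑e '' F) := by
  obtain ⟨⟨x, hx⟩, hup, hinf⟩ := hF
  refine ⟨⟨e x, ⟨x, hx, rfl⟩⟩, ?_, ?_⟩
  · rintro _ b ⟨a, ha, rfl⟩ hab
    exact ⟨e.symm b, hup a _ ha (by simpa using e.le_symm_apply.mpr hab), by simp⟩
  · rintro _ _ ⟨a, ha, rfl⟩ ⟨b, hb, rfl⟩
    exact ⟨a ⊓ b, hinf a b ha hb, by simp [map_inf]⟩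

lemma isUf_preimage (e : B₁ ≃o B₂) {F : Set B₂} (hF : IsUf F) : IsUf (⇑e ⁻¹' F) := by
  obtain ⟨⟨⟨x, hx⟩, hup, hinf⟩, hproper, hmax⟩ := hF
  refine ⟨⟨⟨e.symm x, by simp [hx]⟩, ?_, ?_⟩, ?_, ?_⟩
  · intro a b ha hab
    exact hup _ _ ha (e.le_iff_le.mpr hab)
  · intro a b ha hb
    simpa [Set.mem_preimage, map_inf] using hinf _ _ ha hb
  · intro hcontra
    apply hproper
    ext b
    simp only [Set.mem_univ, iff_true]
    have : e.symm b ∈ ⇑e ⁻¹' F := by rw [hcontra]; trivial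
    simpa using this
  · intro G hG hGproper hsub
    have himg : IsLatFilter (⇑e '' G) := isLatFilter_image e hG
    have himgproper : ⇑e '' G ≠ Set.univ := by
      intro hc
      apply hGproper
      ext a
      simp only [Set.mem_univ, iff_true]
      have : e a ∈ ⇑e '' G := by rw [hc]; trivial
      obtain ⟨a', ha', heq⟩ := this
      rwa [e.injective heq] at ha'
    have hFsub : F ⊆ ⇑e '' G := by
      intro b hb
      exact ⟨e.symm b, hsub (by simpa using hb), by simp⟩
    have := hmax _ himg himgproper hFsub
    ext a
    constructor
    · exact fun ha => hsub ha
    · intro ha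
      have : e a ∈ F := by rw [this]; exact ⟨a, ha, rfl⟩
      exact this

/-- The order isomorphism induced by a bijective bounded lattice homomorphism. -/
noncomputable def toIso (h : BoundedLatticeHom B₁ B₂) (hbij : Function.Bijective h) :
    B₁ ≃o B₂ where
  toEquiv := Equiv.ofBijective ⇑h hbij
  map_rel_iff' := by
    intro a b
    show h a ≤ h b ↔ a ≤ b
    constructor
    · intro hle
      have h1 : h (a ⊓ b) = h a := by rw [map_inf]; exact inf_eq_left.mpr hle
      exact inf_eq_left.mp (hbij.1 h1)
    · intro hle
      have h1 : h (a ⊓ b) = h a := by rw [inf_eq_left.mpr hle]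
      rw [map_inf] at h1
      exact inf_eq_left.mp h1

end Aux

/-- If a Boolean homomorphism `h : B₁ → B₂` is an isomorphism (a bijective
Boolean homomorphism), then its canonical extension `h^σ : 𝒫(Uf B₁) → 𝒫(Uf B₂)` is a Boolean
algebra isomorphism between the powerset Boolean algebras: it is bijective and preserves
intersections, unions, complements, `∅` and the whole set. -/
theorem canExt_isomorphism {B₁ B₂ : Type*} [BooleanAlgebra B₁] [BooleanAlgebra B₂]
    (h : BoundedLatticeHom B₁ B₂) (hbij : Function.Bijective h) :
    Function.Bijective (canExt (⇑h)) ∧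
    (∀ A A' : Set (Uf B₁), canExt (⇑h) (A ∩ A') = canExt (⇑h) A ∩ canExt (⇑h) A') ∧
    (∀ A A' : Set (Uf B₁), canExt (⇑h) (A ∪ A') = canExt (⇑h) A ∪ canExt (⇑h) A') ∧
    (∀ A : Set (Uf B₁), canExt (⇑h) Aᶜ = (canExt (⇑h) A)ᶜ) ∧
    canExt (⇑h) (∅ : Set (Uf B₁)) = (∅ : Set (Uf B₂)) ∧
    canExt (⇑h) (Set.univ : Set (Uf B₁)) = (Set.univ : Set (Uf B₂)) := by
  set e : B₁ ≃o B₂ := toIso h hbij with he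
  have hce : ⇑e = ⇑h := rfl
  -- the induced map on ultrafilters
  set g : Uf B₂ → Uf B₁ := fun u => ⟨⇑h ⁻¹' u.1, by
    rw [← hce]; exact isUf_preimage e u.2⟩ with hg
  -- key: canExt h = preimage under g
  have key : ∀ A : Set (Uf B₁), canExt (⇑h) A = g ⁻¹' A := by
    intro A
    ext u
    simp only [canExt, Set.mem_iUnion, Set.mem_setOf_eq, Set.mem_preimage]
    constructor
    · rintro ⟨F, ⟨⟨hFfil, hFsub⟩, hmem⟩⟩
      apply hFsub
      simp only [Set.mem_iInter]
      intro a ha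
      have := Set.mem_iInter₂.mp hmem a ha
      exact this
    · intro hgA
      refine ⟨(g u).1, ⟨⟨(g u).2.1, ?_⟩, ?_⟩⟩
      · intro v hv
        have hsub : (g u).1 ⊆ v.1 := by
          intro a ha
          exact Set.mem_iInter₂.mp hv a ha
        have : (g u).1 = v.1 := (g u).2.2.2 v.1 v.2.1 v.2.2.1 hsub
        have hv' : v = g u := Subtype.ext this.symm
        rwa [hv']
      · apply Set.mem_iInter₂.mpr
        intro a ha
        exact ha
  have gbij : Function.Bijective g := by
    constructor
    · intro u v huv
      apply Subtype.ext
      have : ⇑h ⁻¹' u.1 = ⇑h ⁻¹' v.1 := congrArg Subtype.val huv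
      exact (Set.preimage_injective.mpr hbij.2) this
    · intro v
      have himg : IsUf (⇑h '' v.1) := by
        have : ⇑h '' v.1 = ⇑e.symm ⁻¹' v.1 := by
          ext b
          simp only [Set.mem_image, Set.mem_preimage]
          constructor
          · rintro ⟨a, ha, rfl⟩
            simpa [← hce] using ha
          · intro hb
            exact ⟨e.symm b, hb, by simp [← hce]⟩
        rw [this]
        exact isUf_preimage e.symm v.2
      refine ⟨⟨⇑h '' v.1, himg⟩, ?_⟩
      apply Subtype.ext
      show ⇑h ⁻¹' (⇑h '' v.1) = v.1
      exact Set.preimage_image_eq _ hbij.1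
  refine ⟨?_, ?_, ?_, ?_, ?_, ?_⟩
  · have : canExt (⇑h) = fun A => g ⁻¹' A := funext key
    rw [this]
    exact ⟨Set.preimage_injective.mpr gbij.2, Set.preimage_surjective.mpr gbij.1⟩
  · intro A A'; simp [key]
  · intro A A'; simp [key, Set.preimage_union]
  · intro A; simp [key]
  · simp [key]
  · simp [key]
end
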